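/- For fixed r ≥ 1, a squarefree q ≥ 1, and residue classes c₁, c₂ mod r, the quantity V₂(q,h;r,c₁,c₂) = Σ_{1 < d | q, (d,r)=1} (μ(d)²/φ(d)²) Σ_{1 ≤ a ≤ d, (a,d)=1} E_{r,c₁}(a/d) E_{r,c₂}(−a/d) satisfies V₂(q,h;r,c₁,c₂) ≪_r h · q/φ(q). -/

import Mathlib

open scoped BigOperators Real

/-- `e(x) = exp(2πix)`. -/
noncomputable def e (x : ℝ) : ℂ := Complex.exp (2 * π * Complex.I * x)

/-- `E_{r,c}(α) = Σ_{1 ≤ m ≤ h, m ≡ c (mod r)} e(mα)`. -/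
noncomputable def Erc (r : ℕ) (c : ZMod r) (h : ℕ) (α : ℝ) : ℂ :=
  ∑ m ∈ (Finset.Icc 1 h).filter (fun m => (Nat.cast m : ZMod r) = c), e ((m : ℝ) * α)

/-- `V₂(q,h;r,c₁,c₂) = Σ_{1<d|q, (d,r)=1} (μ(d)²/φ(d)²) Σ_{1≤a≤d,(a,d)=1}
E_{r,c₁}(a/d) E_{r,c₂}(−a/d)`. -/
noncomputable def V2 (q h r : ℕ) (c₁ c₂ : ZMod r) : ℂ :=
  ∑ d ∈ q.divisors.filter (fun d => 1 < d ∧ Nat.Coprime d r),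
    ((ArithmeticFunction.moebius d : ℂ) ^ 2 / (Nat.totient d : ℂ) ^ 2) *
      ∑ a ∈ (Finset.Icc 1 d).filter (fun a => Nat.Coprime a d),
        Erc r c₁ h ((a : ℝ) / d) * Erc r c₂ h (-(a : ℝ) / d)

lemma e_add (x y : ℝ) : e (x + y) = e x * e y := by
  simp [e, mul_add, Complex.exp_add]

lemma e_zero : e 0 = 1 := by simp [e]

lemma e_int (n : ℤ) : e n = 1 := by
  simp [e]
  rw [show 2 * (π:ℂ) * Complex.I * n = n * (2 * π * Complex.I) by ring]
  exact Complex.exp_int_mul_two_pi_mul_I n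

lemma e_conj (x : ℝ) : starRingEnd ℂ (e x) = e (-x) := by
  rw [e, e, ← Complex.exp_conj]
  congr 1
  simp only [map_mul, Complex.conj_I, Complex.conj_ofReal, map_ofNat, Complex.ofReal_neg]
  ring

lemma e_pow (x : ℝ) (k : ℕ) : (e x) ^ k = e (k * x) := by
  induction k with
  | zero => simp [e_zero]
  | succ n ih =>
    rw [pow_succ, ih, ← e_add]
    congr 1
    push_cast
    ring

lemma orth (d : ℕ) (hd : 0 < d) (n : ℤ) :
    ∑ a ∈ Finset.range d, e ((n : ℝ) * a / d) = if (d:ℤ) ∣ n then (d:ℂ) else 0 := by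
  have hd0 : (d : ℝ) ≠ 0 := by positivity
  have hterm : ∀ a : ℕ, e ((n : ℝ) * a / d) = (e ((n : ℝ) / d)) ^ a := by
    intro a
    rw [e_pow]
    congr 1
    ring
  have hzd : (e ((n : ℝ) / d)) ^ d = 1 := by
    rw [e_pow]
    rw [show (d : ℝ) * ((n:ℝ)/d) = (n : ℝ) by field_simp]
    exact e_int n
  simp_rw [hterm]
  by_cases hdvd : (d:ℤ) ∣ n
  · obtain ⟨k, hk⟩ := hdvd
    have : (n : ℝ) / d = (k : ℝ) := by
      rw [hk]; push_cast; field_simp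
    rw [this, e_int k]
    rw [if_pos ⟨k, hk⟩]
    simp
  · have hz1 : e ((n : ℝ) / d) ≠ 1 := by
      intro hcon
      apply hdvd
      rw [e, Complex.exp_eq_one_iff] at hcon
      obtain ⟨m, hm⟩ := hcon
      have h2 : ((n : ℝ) / d : ℂ) = (m : ℂ) := by
        have hne : (2 * (π:ℂ) * Complex.I) ≠ 0 := by
          simp [Real.pi_ne_zero, Complex.I_ne_zero]
        apply mul_left_cancel₀ hne
        push_cast at hm ⊢
        rw [hm]; ring
      have h3 : (n : ℝ) / d = (m : ℝ) := by exact_mod_cast h2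
      refine ⟨m, ?_⟩
      have h4 : (n : ℝ) = (d : ℝ) * m := by
        field_simp at h3
        linarith [h3]
      exact_mod_cast h4
    rw [geom_sum_eq hz1, hzd]
    simp [hdvd]

lemma Erc_neg (r : ℕ) (c : ZMod r) (h : ℕ) (α : ℝ) :
    Erc r c h (-α) = starRingEnd ℂ (Erc r c h α) := by
  rw [Erc, Erc, map_sum]
  apply Finset.sum_congr rfl
  intro m _
  rw [e_conj]
  congr 1
  ring

lemma parseval (r : ℕ) (c : ZMod r) (h d : ℕ) (hd : 0 < d) :
    ∑ a ∈ Finset.range d, ‖Erc r c h ((a:ℝ)/d)‖^2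
      = (d : ℝ) * (((((Finset.Icc 1 h).filter (fun m => (Nat.cast m : ZMod r) = c)) ×ˢ
            ((Finset.Icc 1 h).filter (fun m => (Nat.cast m : ZMod r) = c))).filter
          (fun p => (d:ℤ) ∣ ((p.1 : ℤ) - (p.2 : ℤ)))).card : ℝ) := by
  set S := (Finset.Icc 1 h).filter (fun m => (Nat.cast m : ZMod r) = c) with hS
  have expand : ∀ a : ℕ, Erc r c h ((a:ℝ)/d) * starRingEnd ℂ (Erc r c h ((a:ℝ)/d))
      = ∑ p ∈ S ×ˢ S, e (((((p.1 : ℤ) - (p.2 : ℤ)) : ℤ) : ℝ) * a / d) := by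
    intro a
    rw [Erc, map_sum, Finset.sum_mul_sum, ← Finset.sum_product']
    apply Finset.sum_congr rfl
    intro p hp
    rw [e_conj, ← e_add]
    congr 1
    push_cast
    ring
  have key : ∑ a ∈ Finset.range d, (Erc r c h ((a:ℝ)/d) * starRingEnd ℂ (Erc r c h ((a:ℝ)/d)))
      = (d : ℂ) * (((S ×ˢ S).filter (fun p => (d:ℤ) ∣ ((p.1 : ℤ) - (p.2 : ℤ)))).card : ℂ) := by
    simp_rw [expand]
    rw [Finset.sum_comm]
    have : ∀ p : ℕ × ℕ, p ∈ S ×ˢ S →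
        ∑ a ∈ Finset.range d, e (((((p.1 : ℤ) - (p.2 : ℤ)) : ℤ) : ℝ) * a / d)
          = if (d:ℤ) ∣ ((p.1 : ℤ) - (p.2 : ℤ)) then (d:ℂ) else 0 := fun p _ =>
      orth d hd _
    rw [Finset.sum_congr rfl this, ← Finset.sum_filter, Finset.sum_const]
    simp [mul_comm]
  have c1 : ∀ z : ℂ, z * starRingEnd ℂ z = (‖z‖^2 : ℝ) := by
    intro z
    rw [Complex.mul_conj, Complex.normSq_eq_norm_sq]
  simp_rw [c1] at key
  rw [← Complex.ofReal_sum] at key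
  apply Complex.ofReal_injective
  exact_mod_cast key

lemma count_upper (k v h : ℕ) (hk : 0 < k) :
    ((Finset.Icc 1 h).filter (fun m => m ≡ v [MOD k])).card ≤ h / k + 1 := by
  have key : ((Finset.Icc 1 h).filter (fun m => m ≡ v [MOD k])).card
      ≤ (Finset.range (h/k+1)).card := by
    apply Finset.card_le_card_of_injOn (fun m => m / k)
    · intro m hm
      simp only [Finset.mem_coe, Finset.mem_filter, Finset.mem_Icc] at hm
      simp only [Finset.mem_coe, Finset.mem_range]
      exact Nat.lt_succ_of_le (Nat.div_le_div_right hm.1.2)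
    · intro m hm m' hm' heq
      simp only [Finset.mem_coe, Finset.mem_filter, Finset.mem_Icc] at hm hm'
      have h1 : m % k = m' % k := by
        have := hm.2
        have := hm'.2
        unfold Nat.ModEq at *
        omega
      calc m = k*(m/k) + m%k := (Nat.div_add_mod m k).symm
        _ = k*(m'/k) + m'%k := by simp only at heq; rw [heq, h1]
        _ = m' := Nat.div_add_mod m' k
  simpa using key

lemma count_lower (r h : ℕ) (hr : 0 < r) (c : ZMod r) :
    h / r ≤ ((Finset.Icc 1 h).filter (fun m => (Nat.cast m : ZMod r) = c)).card := by
  haveI : NeZero r := ⟨hr.ne'⟩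
  set v : ℕ := if c.val = 0 then r else c.val with hv
  have hv1 : 1 ≤ v := by
    rw [hv]; split <;> omega
  have hvr : v ≤ r := by
    rw [hv]; split
    · omega
    · exact le_of_lt (ZMod.val_lt c)
  have hvc : (v : ZMod r) = c := by
    by_cases h0 : c.val = 0
    · rw [hv, if_pos h0, ZMod.natCast_self]
      have hc : c = 0 := by
        have h2 := ZMod.natCast_rightInverse (n := r) c
        rw [← h2, h0]
        simp
      rw [hc]
    · rw [hv, if_neg h0]
      exact ZMod.natCast_rightInverse c
  have key : (Finset.range (h/r)).card
      ≤ ((Finset.Icc 1 h).filter (fun m => (Nat.cast m : ZMod r) = c)).card := by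
    apply Finset.card_le_card_of_injOn (fun j => v + r*j)
    · intro j hj
      simp only [Finset.mem_coe, Finset.mem_range] at hj
      simp only [Finset.mem_coe, Finset.mem_filter, Finset.mem_Icc]
      refine ⟨⟨by omega, ?_⟩, ?_⟩
      · have h2 : v + r*j ≤ r + r*(h/r - 1) := by
          have : j ≤ h/r - 1 := by omega
          have := Nat.mul_le_mul_left r this
          omega
        have h3 : r + r*(h/r-1) ≤ r*(h/r) := by
          have h4 : 1 + (h/r - 1) = h/r := by omega
          apply le_of_eq
          calc r + r*(h/r-1) = r*(1 + (h/r-1)) := by ring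
            _ = r*(h/r) := by rw [h4]
        have h5 : r*(h/r) ≤ h := Nat.mul_div_le h r
        omega
      · push_cast
        rw [ZMod.natCast_self]
        simp [hvc]
    · intro j hj j' hj' heq
      simp only at heq
      have := Nat.eq_of_mul_eq_mul_left hr (by omega : r*j = r*j')
      exact this
  simpa using key

lemma telescope_eq (N : ℕ) (hN : 1 ≤ N) :
    ∑ n ∈ Finset.Icc 2 N, (1:ℝ)/(n*(n-1)) = 1 - 1/N := by
  induction N, hN using Nat.le_induction with
  | base => simp
  | succ N hN ih =>
    rw [Finset.sum_Icc_succ_top (by omega), ih]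
    have h1 : (1:ℝ) ≤ (N:ℝ) := by exact_mod_cast hN
    have h2 : ((N+1:ℕ):ℝ) = (N:ℝ) + 1 := by push_cast; ring
    rw [h2]
    have h3 : (N:ℝ) ≠ 0 := by linarith
    have h4 : (N:ℝ) + 1 ≠ 0 := by linarith
    field_simp
    ring_nf
    rw [mul_inv_cancel₀ h3]; ring

lemma telescope (N : ℕ) : ∑ n ∈ Finset.Icc 2 N, (1:ℝ)/(n*(n-1)) ≤ 1 := by
  rcases Nat.eq_zero_or_pos N with h | h
  · subst h; simp
  · rw [telescope_eq N h]
    have : 0 < (N:ℝ) := by exact_mod_cast h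
    have : 0 < 1/(N:ℝ) := by positivity
    linarith

noncomputable def fdiv : ArithmeticFunction ℝ :=
  ⟨fun d => if d = 0 then 0 else (d:ℝ)/(Nat.totient d)^2, by simp⟩

lemma fdiv_apply (d : ℕ) (hd : d ≠ 0) : fdiv d = (d:ℝ)/(Nat.totient d)^2 := by
  simp [fdiv, ArithmeticFunction.coe_mk, hd]

lemma fdiv_mult : fdiv.IsMultiplicative := by
  constructor
  · simp [fdiv, ArithmeticFunction.coe_mk]
  · intro m n hmn
    rcases Nat.eq_zero_or_pos m with hm | hm
    · subst hm
      have : n = 1 := by simpa using hmn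
      subst this
      simp [fdiv, ArithmeticFunction.coe_mk]
    rcases Nat.eq_zero_or_pos n with hn | hn
    · subst hn
      have : m = 1 := by simpa [Nat.coprime_zero_right] using hmn
      subst this
      simp [fdiv, ArithmeticFunction.coe_mk]
    rw [fdiv_apply _ (by positivity), fdiv_apply _ (by omega), fdiv_apply _ (by omega),
      Nat.totient_mul hmn]
    push_cast
    ring

lemma divisor_sum_bound (q : ℕ) (hq : Squarefree q) :
    ∑ d ∈ q.divisors, (d:ℝ)/(Nat.totient d)^2 ≤ Real.exp 1 * ((q:ℝ) / (Nat.totient q)) := by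
  have hq0 : q ≠ 0 := hq.ne_zero
  have hsum := fdiv_mult.prodPrimeFactors_one_add_of_squarefree hq
  have hsum' : ∑ d ∈ q.divisors, (d:ℝ)/(Nat.totient d)^2
      = ∏ p ∈ q.primeFactors, (1 + fdiv p) := by
    rw [hsum]
    apply Finset.sum_congr rfl
    intro d hd
    rw [fdiv_apply d (Nat.pos_of_mem_divisors hd).ne']
  rw [hsum']
  -- each prime factor
  have hple : ∀ p ∈ q.primeFactors, 2 ≤ p ∧ p ≤ q :=
    fun p hp => ⟨(Nat.prime_of_mem_primeFactors hp).two_le,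
      Nat.le_of_dvd (Nat.pos_of_ne_zero hq0) (Nat.dvd_of_mem_primeFactors hp)⟩
  have hfactor : ∀ p ∈ q.primeFactors,
      (1 + fdiv p) = ((p:ℝ)/((p:ℝ)-1)) * (1 + 1/((p:ℝ)*((p:ℝ)-1))) := by
    intro p hp
    have hp2 : 2 ≤ p := (hple p hp).1
    rw [fdiv_apply p (by omega), Nat.totient_prime (Nat.prime_of_mem_primeFactors hp)]
    have hcast : ((p - 1 : ℕ) : ℝ) = (p:ℝ) - 1 := by
      have : 1 ≤ p := by omega
      push_cast [this]
      ring
    rw [hcast]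
    have hp1 : (1:ℝ) ≤ (p:ℝ) - 1 := by
      have : (2:ℝ) ≤ (p:ℝ) := by exact_mod_cast hp2
      linarith
    field_simp
    ring
  rw [Finset.prod_congr rfl hfactor, Finset.prod_mul_distrib]
  -- first product = q/φ(q)
  have hprod1 : ∏ p ∈ q.primeFactors, ((p:ℝ)/((p:ℝ)-1)) = (q:ℝ)/(Nat.totient q) := by
    have hphi : Nat.totient q = ∏ p ∈ q.primeFactors, (p - 1) := by
      have h1 := Nat.totient_mul_prod_primeFactors q
      rw [Nat.prod_primeFactors_of_squarefree hq] at h1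
      exact Nat.eq_of_mul_eq_mul_right (Nat.pos_of_ne_zero hq0) (by linarith [h1])
    rw [Finset.prod_div_distrib]
    congr 1
    · rw [← Nat.cast_prod]
      exact_mod_cast congrArg (Nat.cast : ℕ → ℝ) (Nat.prod_primeFactors_of_squarefree hq)
    · rw [hphi]
      push_cast
      apply Finset.prod_congr rfl
      intro p hp
      have : 1 ≤ p := by have := (hple p hp).1; omega
      push_cast [this]
      ring
  rw [hprod1]
  -- second product ≤ exp 1
  have hprod2 : ∏ p ∈ q.primeFactors, (1 + 1/((p:ℝ)*((p:ℝ)-1))) ≤ Real.exp 1 := by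
    have step1 : ∏ p ∈ q.primeFactors, (1 + 1/((p:ℝ)*((p:ℝ)-1)))
        ≤ ∏ p ∈ q.primeFactors, Real.exp (1/((p:ℝ)*((p:ℝ)-1))) := by
      apply Finset.prod_le_prod
      · intro p hp
        have h2 : (2:ℝ) ≤ (p:ℝ) := by exact_mod_cast (hple p hp).1
        have : (0:ℝ) < (p:ℝ)*((p:ℝ)-1) := by nlinarith
        have : 0 < 1/((p:ℝ)*((p:ℝ)-1)) := by positivity
        linarith
      · intro p hp
        have := Real.add_one_le_exp (1/((p:ℝ)*((p:ℝ)-1)))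
        linarith
    rw [← Real.exp_sum] at step1
    have step2 : ∑ p ∈ q.primeFactors, 1/((p:ℝ)*((p:ℝ)-1)) ≤ 1 := by
      have hsub : q.primeFactors ⊆ Finset.Icc 2 q := by
        intro p hp
        rw [Finset.mem_Icc]
        exact hple p hp
      calc ∑ p ∈ q.primeFactors, 1/((p:ℝ)*((p:ℝ)-1))
          ≤ ∑ n ∈ Finset.Icc 2 q, 1/((n:ℝ)*((n:ℝ)-1)) := by
            apply Finset.sum_le_sum_of_subset_of_nonneg hsub
            intro n hn _
            have h2 : (2:ℝ) ≤ (n:ℝ) := by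
              rw [Finset.mem_Icc] at hn
              exact_mod_cast hn.1
            have : (0:ℝ) < (n:ℝ)*((n:ℝ)-1) := by nlinarith
            positivity
        _ ≤ 1 := telescope q
    calc ∏ p ∈ q.primeFactors, (1 + 1/((p:ℝ)*((p:ℝ)-1)))
        ≤ Real.exp (∑ p ∈ q.primeFactors, 1/((p:ℝ)*((p:ℝ)-1))) := step1
      _ ≤ Real.exp 1 := Real.exp_le_exp.mpr step2
  have hq_phi : (0:ℝ) ≤ (q:ℝ)/(Nat.totient q) := by positivity
  calc (q:ℝ)/(Nat.totient q) * ∏ p ∈ q.primeFactors, (1 + 1/((p:ℝ)*((p:ℝ)-1)))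
      ≤ (q:ℝ)/(Nat.totient q) * Real.exp 1 := by
        apply mul_le_mul_of_nonneg_left hprod2 hq_phi
    _ = Real.exp 1 * ((q:ℝ)/(Nat.totient q)) := by ring

set_option maxHeartbeats 2000000 in
lemma inner_sq_bound (r : ℕ) (hr : 0 < r) (c : ZMod r) (h d : ℕ) (hh : 1 ≤ h) (hd : 1 < d)
    (hdr : Nat.Coprime d r) :
    ∑ a ∈ (Finset.Icc 1 d).filter (fun a => Nat.Coprime a d), ‖Erc r c h ((a:ℝ)/d)‖^2
      ≤ 2 * (h:ℝ) * d := by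
  have hd0 : 0 < d := by omega
  set S := (Finset.Icc 1 h).filter (fun m => (Nat.cast m : ZMod r) = c) with hS
  set s := S.card with hs
  set P := (S ×ˢ S).filter (fun p => (d:ℤ) ∣ ((p.1 : ℤ) - (p.2 : ℤ))) with hP
  set N := P.card with hN
  -- Step 1 : restrict to range d minus 0
  have hsub : (Finset.Icc 1 d).filter (fun a => Nat.Coprime a d) ⊆ (Finset.range d).erase 0 := by
    intro a ha
    simp only [Finset.mem_filter, Finset.mem_Icc] at ha
    have had : a ≠ d := by
      rintro rfl
      have h2 := ha.2
      rw [Nat.Coprime, Nat.gcd_self] at h2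
      omega
    simp only [Finset.mem_erase, Finset.mem_range]
    omega
  have step1 : ∑ a ∈ (Finset.Icc 1 d).filter (fun a => Nat.Coprime a d), ‖Erc r c h ((a:ℝ)/d)‖^2
      ≤ ∑ a ∈ (Finset.range d).erase 0, ‖Erc r c h ((a:ℝ)/d)‖^2 := by
    apply Finset.sum_le_sum_of_subset_of_nonneg hsub
    intro a _ _
    positivity
  -- Step 2 : erase identity
  have hE0 : ‖Erc r c h (((0:ℕ):ℝ)/d)‖^2 = (s:ℝ)^2 := by
    have : ((0:ℕ):ℝ)/d = 0 := by simp
    rw [this]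
    have : Erc r c h 0 = (s : ℂ) := by
      rw [Erc]
      simp only [mul_zero, e_zero]
      rw [Finset.sum_const]
      simp [hs, hS]
    rw [this]
    simp
  have step2 : ∑ a ∈ (Finset.range d).erase 0, ‖Erc r c h ((a:ℝ)/d)‖^2
      = (∑ a ∈ Finset.range d, ‖Erc r c h ((a:ℝ)/d)‖^2) - (s:ℝ)^2 := by
    rw [Finset.sum_erase_eq_sub (Finset.mem_range.mpr hd0), hE0]
  -- Step 3 : parseval
  have step3 := parseval r c h d hd0
  -- Step 4 : count N
  have hNle : N ≤ (h/(r*d) + 1) * s := by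
    have himg : P.image Prod.fst ⊆ S := by
      intro m hm
      obtain ⟨p, hp, rfl⟩ := Finset.mem_image.mp hm
      rw [hP, Finset.mem_filter, Finset.mem_product] at hp
      exact hp.1.1
    have hfiber : ∀ m ∈ P.image Prod.fst,
        (P.filter (fun p => p.1 = m)).card ≤ h/(r*d) + 1 := by
      intro m _
      have hinj : (P.filter (fun p => p.1 = m)).card
          ≤ ((Finset.Icc 1 h).filter (fun m' => m' ≡ m [MOD r*d])).card := by
        apply Finset.card_le_card_of_injOn Prod.snd
        · intro p hp
          simp only [Finset.mem_coe, Finset.mem_filter] at hp ⊢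
          obtain ⟨hpP, hpm⟩ := hp
          rw [hP, Finset.mem_filter, Finset.mem_product] at hpP
          obtain ⟨⟨h1, h2⟩, hdvd⟩ := hpP
          rw [hS, Finset.mem_filter] at h1 h2
          constructor
          · exact h2.1
          · -- p.2 ≡ m [MOD r*d]
            subst hpm
            have hmr : p.2 ≡ p.1 [MOD r] := by
              rw [← ZMod.natCast_eq_natCast_iff]
              rw [h1.2, h2.2]
            have hmd : p.2 ≡ p.1 [MOD d] := by
              rw [Nat.modEq_iff_dvd]
              push_cast
              exact hdvd
            exact (Nat.modEq_and_modEq_iff_modEq_mul (Nat.Coprime.symm hdr)).mp ⟨hmr, hmd⟩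
        · intro p hp p' hp' heq
          simp only [Finset.mem_coe, Finset.mem_filter] at hp hp'
          have := hp.2
          have := hp'.2
          ext
          · rw [hp.2, hp'.2]
          · exact heq
      calc (P.filter (fun p => p.1 = m)).card
          ≤ ((Finset.Icc 1 h).filter (fun m' => m' ≡ m [MOD r*d])).card := hinj
        _ ≤ h/(r*d) + 1 := count_upper (r*d) m h (by positivity)
    calc N ≤ (h/(r*d) + 1) * (P.image Prod.fst).card :=
        Finset.card_le_mul_card_image P _ hfiber
      _ ≤ (h/(r*d) + 1) * s := by
          apply Nat.mul_le_mul_left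
          exact Finset.card_le_card himg
  -- Step 5: real arithmetic
  have hcount_low : (h:ℝ)/r ≤ (s:ℝ) + 1 := by
    have h1 := count_lower r h hr c
    have h2 : ((h/r : ℕ):ℝ) ≤ (s:ℝ) := by exact_mod_cast h1
    have h3 : (h:ℝ) < r * ((h/r:ℕ) + 1) := by
      have e1 := Nat.div_add_mod h r
      have e2 : h % r < r := Nat.mod_lt h hr
      have e1' : (r:ℝ) * ((h/r:ℕ):ℝ) + ((h%r:ℕ):ℝ) = h := by exact_mod_cast e1
      have e2' : ((h%r:ℕ):ℝ) < r := by exact_mod_cast e2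
      nlinarith [e1', e2']
    have hr0 : (0:ℝ) < r := by exact_mod_cast hr
    rw [div_le_iff₀ hr0]
    nlinarith
  have hsh : (s:ℝ) ≤ (h:ℝ) := by
    have : S.card ≤ (Finset.Icc 1 h).card := Finset.card_le_card (Finset.filter_subset _ _)
    rw [Nat.card_Icc] at this
    exact_mod_cast (by omega : s ≤ h)
  have hu : ((h/(r*d) : ℕ):ℝ) * (r*d : ℝ) ≤ (h:ℝ) := by
    have := Nat.div_mul_le_self h (r*d)
    exact_mod_cast this
  have hNleR : (N:ℝ) ≤ (((h/(r*d):ℕ):ℝ) + 1) * s := by exact_mod_cast hNle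
  have hr1 : (1:ℝ) ≤ r := by exact_mod_cast hr
  have hd1 : (1:ℝ) < d := by exact_mod_cast hd
  have hh1 : (1:ℝ) ≤ h := by exact_mod_cast hh
  have hs0 : (0:ℝ) ≤ s := by positivity
  have hu0 : (0:ℝ) ≤ ((h/(r*d):ℕ):ℝ) := by positivity
  -- u * d ≤ s + 1
  have hud : ((h/(r*d):ℕ):ℝ) * d ≤ (s:ℝ) + 1 := by
    have hrr : (0:ℝ) < r := by linarith
    have h5 : (h:ℝ) ≤ r * ((s:ℝ)+1) := by
      rw [div_le_iff₀ hrr] at hcount_low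
      linarith
    nlinarith
  calc ∑ a ∈ (Finset.Icc 1 d).filter (fun a => Nat.Coprime a d), ‖Erc r c h ((a:ℝ)/d)‖^2
      ≤ (∑ a ∈ Finset.range d, ‖Erc r c h ((a:ℝ)/d)‖^2) - (s:ℝ)^2 := by
        rw [← step2]; exact step1
    _ = (d:ℝ) * N - (s:ℝ)^2 := by rw [step3]
    _ ≤ 2 * (h:ℝ) * d := by nlinarith [hNleR, hud, hsh, hs0, hd1, hh1]

lemma inner_bound (r : ℕ) (hr : 0 < r) (c₁ c₂ : ZMod r) (h d : ℕ) (hh : 1 ≤ h) (hd : 1 < d)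
    (hdr : Nat.Coprime d r) :
    ‖∑ a ∈ (Finset.Icc 1 d).filter (fun a => Nat.Coprime a d),
        Erc r c₁ h ((a : ℝ) / d) * Erc r c₂ h (-(a : ℝ) / d)‖ ≤ 2 * (h:ℝ) * d := by
  set A := (Finset.Icc 1 d).filter (fun a => Nat.Coprime a d) with hA
  have hnorm2 : ∀ a : ℕ, ‖Erc r c₂ h (-(a:ℝ)/d)‖ = ‖Erc r c₂ h ((a:ℝ)/d)‖ := by
    intro a
    rw [neg_div, Erc_neg]
    exact RCLike.norm_conj _
  have step1 : ‖∑ a ∈ A, Erc r c₁ h ((a : ℝ) / d) * Erc r c₂ h (-(a : ℝ) / d)‖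
      ≤ ∑ a ∈ A, ‖Erc r c₁ h ((a:ℝ)/d)‖ * ‖Erc r c₂ h ((a:ℝ)/d)‖ := by
    calc ‖∑ a ∈ A, Erc r c₁ h ((a : ℝ) / d) * Erc r c₂ h (-(a : ℝ) / d)‖
        ≤ ∑ a ∈ A, ‖Erc r c₁ h ((a : ℝ) / d) * Erc r c₂ h (-(a : ℝ) / d)‖ :=
          norm_sum_le _ _
      _ = ∑ a ∈ A, ‖Erc r c₁ h ((a:ℝ)/d)‖ * ‖Erc r c₂ h ((a:ℝ)/d)‖ := by
          apply Finset.sum_congr rfl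
          intro a _
          rw [norm_mul, hnorm2]
  have hcs := Finset.sum_mul_sq_le_sq_mul_sq A (fun a => ‖Erc r c₁ h ((a:ℝ)/d)‖)
    (fun a => ‖Erc r c₂ h ((a:ℝ)/d)‖)
  have hb1 := inner_sq_bound r hr c₁ h d hh hd hdr
  have hb2 := inner_sq_bound r hr c₂ h d hh hd hdr
  have hX0 : (0:ℝ) ≤ ∑ a ∈ A, ‖Erc r c₁ h ((a:ℝ)/d)‖ * ‖Erc r c₂ h ((a:ℝ)/d)‖ := by
    apply Finset.sum_nonneg
    intro a _
    positivity
  have h2hd : (0:ℝ) ≤ 2*(h:ℝ)*d := by positivity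
  have hs1 : (0:ℝ) ≤ ∑ a ∈ A, ‖Erc r c₁ h ((a:ℝ)/d)‖^2 :=
    Finset.sum_nonneg (fun a _ => by positivity)
  have hs2 : (0:ℝ) ≤ ∑ a ∈ A, ‖Erc r c₂ h ((a:ℝ)/d)‖^2 :=
    Finset.sum_nonneg (fun a _ => by positivity)
  have hXsq : (∑ a ∈ A, ‖Erc r c₁ h ((a:ℝ)/d)‖ * ‖Erc r c₂ h ((a:ℝ)/d)‖)^2
      ≤ (2*(h:ℝ)*d)^2 := by
    calc (∑ a ∈ A, ‖Erc r c₁ h ((a:ℝ)/d)‖ * ‖Erc r c₂ h ((a:ℝ)/d)‖)^2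
        ≤ (∑ a ∈ A, ‖Erc r c₁ h ((a:ℝ)/d)‖^2) * (∑ a ∈ A, ‖Erc r c₂ h ((a:ℝ)/d)‖^2) := hcs
      _ ≤ (2*(h:ℝ)*d) * (2*(h:ℝ)*d) := mul_le_mul hb1 hb2 hs2 h2hd
      _ = (2*(h:ℝ)*d)^2 := by ring
  have : ∑ a ∈ A, ‖Erc r c₁ h ((a:ℝ)/d)‖ * ‖Erc r c₂ h ((a:ℝ)/d)‖ ≤ 2*(h:ℝ)*d := by
    nlinarith [hXsq, hX0, h2hd]
  linarith [step1, this]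

theorem stmt_14 (r : ℕ) (hr : 1 ≤ r) :
    ∃ K : ℝ, ∀ q h : ℕ, Squarefree q → 1 ≤ h → ∀ c₁ c₂ : ZMod r,
      ‖V2 q h r c₁ c₂‖ ≤ K * h * q / Nat.totient q := by
  refine ⟨2 * Real.exp 1, ?_⟩
  intro q h hsq hh c₁ c₂
  have hq0 : q ≠ 0 := hsq.ne_zero
  have hφq : 0 < Nat.totient q := Nat.totient_pos.mpr (Nat.pos_of_ne_zero hq0)
  have hr0 : 0 < r := hr
  rw [V2]
  have hterm : ∀ d ∈ q.divisors.filter (fun d => 1 < d ∧ Nat.Coprime d r),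
      ‖((ArithmeticFunction.moebius d : ℂ) ^ 2 / (Nat.totient d : ℂ) ^ 2) *
        ∑ a ∈ (Finset.Icc 1 d).filter (fun a => Nat.Coprime a d),
          Erc r c₁ h ((a : ℝ) / d) * Erc r c₂ h (-(a : ℝ) / d)‖
        ≤ 2 * (h:ℝ) * ((d:ℝ) / ((Nat.totient d : ℝ))^2) := by
    intro d hd
    rw [Finset.mem_filter, Nat.mem_divisors] at hd
    obtain ⟨⟨hdq, _⟩, hd1, hdr⟩ := hd
    have hdsf : Squarefree d := hsq.squarefree_of_dvd hdq
    have hφd : 0 < Nat.totient d := Nat.totient_pos.mpr (by omega)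
    rw [norm_mul]
    have hcoeff : ‖((ArithmeticFunction.moebius d : ℂ) ^ 2 / (Nat.totient d : ℂ) ^ 2)‖
        = 1/((Nat.totient d : ℝ))^2 := by
      have hμ : (ArithmeticFunction.moebius d)^2 = 1 :=
        ArithmeticFunction.moebius_sq_eq_one_of_squarefree hdsf
      have hμ' : ((ArithmeticFunction.moebius d : ℂ))^2 = 1 := by
        exact_mod_cast congrArg (Int.cast : ℤ → ℂ) hμ
      rw [norm_div, hμ', norm_one, norm_pow, Complex.norm_natCast]
    rw [hcoeff]
    have hI := inner_bound r hr0 c₁ c₂ h d hh hd1 hdr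
    calc 1/((Nat.totient d : ℝ))^2 * ‖∑ a ∈ (Finset.Icc 1 d).filter (fun a => Nat.Coprime a d),
          Erc r c₁ h ((a : ℝ) / d) * Erc r c₂ h (-(a : ℝ) / d)‖
        ≤ 1/((Nat.totient d : ℝ))^2 * (2 * (h:ℝ) * d) := by
          apply mul_le_mul_of_nonneg_left hI (by positivity)
      _ = 2 * (h:ℝ) * ((d:ℝ) / ((Nat.totient d : ℝ))^2) := by ring
  calc ‖∑ d ∈ q.divisors.filter (fun d => 1 < d ∧ Nat.Coprime d r),
        ((ArithmeticFunction.moebius d : ℂ) ^ 2 / (Nat.totient d : ℂ) ^ 2) *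
          ∑ a ∈ (Finset.Icc 1 d).filter (fun a => Nat.Coprime a d),
            Erc r c₁ h ((a : ℝ) / d) * Erc r c₂ h (-(a : ℝ) / d)‖
      ≤ ∑ d ∈ q.divisors.filter (fun d => 1 < d ∧ Nat.Coprime d r),
        ‖((ArithmeticFunction.moebius d : ℂ) ^ 2 / (Nat.totient d : ℂ) ^ 2) *
          ∑ a ∈ (Finset.Icc 1 d).filter (fun a => Nat.Coprime a d),
            Erc r c₁ h ((a : ℝ) / d) * Erc r c₂ h (-(a : ℝ) / d)‖ := norm_sum_le _ _
    _ ≤ ∑ d ∈ q.divisors.filter (fun d => 1 < d ∧ Nat.Coprime d r),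
        2 * (h:ℝ) * ((d:ℝ) / ((Nat.totient d : ℝ))^2) := Finset.sum_le_sum hterm
    _ ≤ ∑ d ∈ q.divisors, 2 * (h:ℝ) * ((d:ℝ) / ((Nat.totient d : ℝ))^2) := by
        apply Finset.sum_le_sum_of_subset_of_nonneg (Finset.filter_subset _ _)
        intro d _ _
        positivity
    _ = 2 * (h:ℝ) * ∑ d ∈ q.divisors, (d:ℝ) / ((Nat.totient d : ℝ))^2 := by
        rw [Finset.mul_sum]
    _ ≤ 2 * (h:ℝ) * (Real.exp 1 * ((q:ℝ) / (Nat.totient q : ℝ))) := by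
        apply mul_le_mul_of_nonneg_left (divisor_sum_bound q hsq) (by positivity)
    _ = 2 * Real.exp 1 * (h:ℝ) * (q:ℝ) / (Nat.totient q : ℝ) := by ring
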